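/- arXiv:2205.03397 — 4 statements merged into one kernel-verified Lean document; each statement's English description precedes it below -/
import Mathlib

section
/- For 0 < β ≤ 1, λ > 0, and any z ∈ ℂ, the Laplace transform of the fractional Poisson measure satisfies Σ_{k=0}^∞ (e^z λ)^k / k! · E_β^{(k)}(-λ) = E_β(λ(e^z - 1)). -/
/-- The Mittag-Leffler function `E_β(z) = ∑ zⁿ / Γ(βn+1)`. -/
noncomputable def mittagLeffler (β : ℝ) (z : ℂ) : ℂ :=
  ∑' n : ℕ, z ^ n / Complex.Gamma ((β * n + 1 : ℝ) : ℂ)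

open Filter Topology FormalMultilinearSeries

/-- Coefficients of the Mittag-Leffler power series. -/
noncomputable def mlCoeff (β : ℝ) (n : ℕ) : ℂ :=
  (Complex.Gamma ((β * n + 1 : ℝ) : ℂ))⁻¹

lemma mlCoeff_norm {β : ℝ} (hβ : 0 < β) (n : ℕ) :
    ‖mlCoeff β n‖ = (Real.Gamma (β * n + 1))⁻¹ := by
  have hpos : 0 < Real.Gamma (β * n + 1) :=
    Real.Gamma_pos_of_pos (by positivity)
  rw [mlCoeff, Complex.Gamma_ofReal, norm_inv, Complex.norm_real,
    Real.norm_of_nonneg hpos.le]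

lemma mittagLeffler_eq_sum (β : ℝ) :
    mittagLeffler β = ofScalarsSum (E := ℂ) (mlCoeff β) := by
  funext x
  rw [ofScalars_sum_eq, mittagLeffler]
  refine tsum_congr fun n => ?_
  rw [smul_eq_mul, mlCoeff, div_eq_mul_inv, mul_comm]

lemma mlSeries_radius_top {β : ℝ} (hβ : 0 < β) :
    (ofScalars ℂ (mlCoeff β)).radius = ⊤ := by
  apply FormalMultilinearSeries.radius_eq_top_of_forall_nnreal_isBigO
  intro r
  -- the bound: `t = max r 1`, `s = t ^ ⌈1/β⌉`.
  set t : ℝ := max (r : ℝ) 1 with ht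
  have ht1 : (1 : ℝ) ≤ t := le_max_right _ _
  set K : ℕ := ⌈(1 : ℝ) / β⌉₊ with hK
  set s : ℝ := t ^ K with hs
  have hs1 : (1 : ℝ) ≤ s := one_le_pow₀ ht1
  -- the comparison sequence tends to 0
  have hβn : Tendsto (fun n : ℕ => β * n) atTop atTop :=
    Tendsto.const_mul_atTop hβ tendsto_natCast_atTop_atTop
  have hfloor : Tendsto (fun n : ℕ => ⌊β * n⌋₊) atTop atTop :=
    (tendsto_nat_floor_atTop (α := ℝ)).comp hβn
  have hg : Tendsto (fun n : ℕ => s * (s ^ ⌊β * n⌋₊ / (⌊β * n⌋₊).factorial))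
      atTop (nhds 0) := by
    have h0 : Tendsto (fun m : ℕ => s ^ m / (m.factorial : ℝ)) atTop (nhds 0) :=
      FloorSemiring.tendsto_pow_div_factorial_atTop s
    simpa using (h0.comp hfloor).const_mul s
  -- eventual bound
  have hN : ∀ᶠ n : ℕ in atTop, 2 ≤ β * n := by
    exact hβn.eventually_ge_atTop 2
  have hbound : ∀ᶠ n : ℕ in atTop,
      ‖ofScalars ℂ (mlCoeff β) n‖ * (r : ℝ) ^ n
        ≤ s * (s ^ ⌊β * n⌋₊ / (⌊β * n⌋₊).factorial) := by
    filter_upwards [hN] with n hn2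
    set m : ℕ := ⌊β * n⌋₊ with hm
    have hβn0 : (0 : ℝ) ≤ β * n := le_trans (by norm_num) hn2
    have hm2 : (2 : ℕ) ≤ m := Nat.le_floor (by exact_mod_cast hn2)
    have hmle : (m : ℝ) ≤ β * n := Nat.floor_le hβn0
    -- Gamma bound : m ! ≤ Γ(βn+1)
    have hmono := Real.Gamma_strictMonoOn_Ici.monotoneOn
      (a := ((m : ℝ) + 1)) (b := (β * n + 1))
    have hΓ : (m.factorial : ℝ) ≤ Real.Gamma (β * n + 1) := by
      rw [← Real.Gamma_nat_eq_factorial]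
      apply hmono
      · simp only [Set.mem_Ici]
        have : (2 : ℝ) ≤ (m : ℝ) := by exact_mod_cast hm2
        linarith
      · linarith
      · simp only [Set.mem_Ici]
        have : (2 : ℝ) ≤ (m : ℝ) := by exact_mod_cast hm2
        linarith
    have hΓpos : (0 : ℝ) < (m.factorial : ℝ) := by positivity
    have hinv : (Real.Gamma (β * n + 1))⁻¹ ≤ ((m.factorial : ℝ))⁻¹ :=
      inv_anti₀ hΓpos hΓ
    -- power bound : r^n ≤ s^(m+1)
    have hnle : (n : ℝ) ≤ (K : ℝ) * (m + 1) := by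
      have h1 : β * n < m + 1 := Nat.lt_floor_add_one _
      have h2 : (1 : ℝ) / β ≤ K := Nat.le_ceil _
      have h3 : (n : ℝ) < (1 / β) * (m + 1) := by
        rw [div_mul_eq_mul_div, lt_div_iff₀ hβ, one_mul, mul_comm]
        linarith
      have h4 : (1 / β) * ((m : ℝ) + 1) ≤ (K : ℝ) * (m + 1) := by
        apply mul_le_mul_of_nonneg_right h2 (by positivity)
      linarith
    have hnle' : n ≤ K * (m + 1) := by exact_mod_cast hnle
    have hr : (r : ℝ) ^ n ≤ s ^ (m + 1) := by
      calc (r : ℝ) ^ n ≤ t ^ n :=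
            pow_le_pow_left₀ (r.coe_nonneg) (le_max_left _ _) n
        _ ≤ t ^ (K * (m + 1)) := pow_le_pow_right₀ ht1 hnle'
        _ = s ^ (m + 1) := by rw [hs, ← pow_mul]
    have hnorm : ‖ofScalars ℂ (mlCoeff β) n‖ ≤ (Real.Gamma (β * n + 1))⁻¹ := by
      rw [ofScalars_norm, mlCoeff_norm hβ]
    calc ‖ofScalars ℂ (mlCoeff β) n‖ * (r : ℝ) ^ n
        ≤ ((m.factorial : ℝ))⁻¹ * s ^ (m + 1) := by
          apply mul_le_mul (hnorm.trans hinv) hr (by positivity) (by positivity)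
      _ = s * (s ^ m / (m.factorial : ℝ)) := by
          field_simp; ring
  -- conclude Big-O
  have htend : Tendsto (fun n : ℕ => ‖ofScalars ℂ (mlCoeff β) n‖ * (r : ℝ) ^ n)
      atTop (nhds 0) := by
    apply squeeze_zero' (by filter_upwards with n; positivity) hbound hg
  exact htend.isBigO_one ℝ

lemma mittagLeffler_differentiable {β : ℝ} (hβ : 0 < β) :
    Differentiable ℂ (mittagLeffler β) := by
  rw [mittagLeffler_eq_sum]
  intro x
  have hr : (0 : ENNReal) < (ofScalars ℂ (mlCoeff β)).radius := by
    rw [mlSeries_radius_top hβ]; exact ENNReal.zero_lt_top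
  have hball := (ofScalars ℂ (mlCoeff β)).hasFPowerSeriesOnBall hr
  have hx : x ∈ Metric.eball (0 : ℂ) (ofScalars ℂ (mlCoeff β)).radius := by
    rw [mlSeries_radius_top hβ]
    exact Metric.mem_eball.mpr (edist_lt_top _ _)
  exact (hball.analyticAt_of_mem (by simpa using hx)).differentiableAt

/-- Laplace transform of the fractional Poisson measure:
`∑ (eᶻλ)ᵏ/k! · E_β⁽ᵏ⁾(−λ) = E_β(λ(eᶻ − 1))`. -/
theorem fracPoisson_laplace_transform (β lam : ℝ) (hβ : 0 < β) (hβ1 : β ≤ 1)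
    (hlam : 0 < lam) (z : ℂ) :
    ∑' k : ℕ, (Complex.exp z * lam) ^ k / ((k).factorial : ℂ) *
        iteratedDeriv k (mittagLeffler β) (-(lam : ℂ))
      = mittagLeffler β ((lam : ℂ) * (Complex.exp z - 1)) := by
  have hdiff := mittagLeffler_differentiable hβ
  have ht := Complex.taylorSeries_eq_of_entire' (-(lam : ℂ))
    ((lam : ℂ) * (Complex.exp z - 1)) hdiff
  rw [← ht]
  refine tsum_congr fun k => ?_
  have : (lam : ℂ) * (Complex.exp z - 1) - -(lam : ℂ) = Complex.exp z * lam := by ring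
  rw [this]
  field_simp
end

section
/- Suppose ν_β is a probability measure on [0,∞) with ∫_0^∞ e^{-τz} dν_β(τ) = E_β(-z) for all z with Re z ≥ 0. Then the mixture measure μ = ∫_0^∞ π_{λτ} dν_β(τ) of Poisson measures π_{λτ} equals the fractional Poisson measure π_{λ,β}, i.e., μ({k}) = (λ^k/k!) E_β^{(k)}(-λ) for all k ∈ ℕ. -/
open MeasureTheory Filter Metric Topology

private lemma norm_aux (k : ℕ) {τ : ℝ} (hτ : 0 ≤ τ) (z : ℂ) :
    ‖(-(τ:ℂ))^k * Complex.exp (-(τ:ℂ)*z)‖ = τ^k * Real.exp (-(τ * z.re)) := by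
  rw [norm_mul, norm_pow, norm_neg, Complex.norm_real, Real.norm_eq_abs,
    abs_of_nonneg hτ, Complex.norm_exp]
  congr 2
  simp [Complex.ofReal_mul]

private lemma bound_aux (k : ℕ) {ε τ : ℝ} (hε : 0 < ε) (hτ : 0 ≤ τ) :
    τ^k * Real.exp (-(τ * ε)) ≤ k.factorial / ε^k := by
  have h := Real.pow_div_factorial_le_exp (τ*ε) (mul_nonneg hτ hε.le) k
  have h2 : (τ*ε)^k ≤ k.factorial * Real.exp (τ*ε) := by
    rw [div_le_iff₀ (by positivity)] at h
    linarith
  have key : τ^k * Real.exp (-(τ*ε)) * ε^k ≤ k.factorial := by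
    calc τ^k * Real.exp (-(τ*ε)) * ε^k = (τ*ε)^k * Real.exp (-(τ*ε)) := by
          rw [mul_pow]; ring
      _ ≤ (k.factorial * Real.exp (τ*ε)) * Real.exp (-(τ*ε)) :=
          mul_le_mul_of_nonneg_right h2 (Real.exp_pos _).le
      _ = k.factorial := by rw [mul_assoc, ← Real.exp_add]; simp
  exact (le_div_iff₀ (pow_pos hε k)).mpr key

private lemma cont_aux (k : ℕ) (z : ℂ) :
    Continuous (fun τ : ℝ => (-(τ:ℂ))^k * Complex.exp (-(τ:ℂ)*z)) := by
  fun_prop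

private lemma integrable_aux (ν : Measure ℝ) [IsProbabilityMeasure ν]
    (hae : ∀ᵐ τ ∂ν, 0 ≤ τ) (k : ℕ) {z : ℂ} (hz : 0 < z.re) :
    Integrable (fun τ : ℝ => (-(τ:ℂ))^k * Complex.exp (-(τ:ℂ)*z)) ν := by
  refine Integrable.mono' (integrable_const ((k.factorial : ℝ) / z.re^k))
    ((cont_aux k z).aestronglyMeasurable) ?_
  filter_upwards [hae] with τ hτ
  rw [norm_aux k hτ z]
  exact bound_aux k hz hτ

private lemma hasDerivAt_aux (ν : Measure ℝ) [IsProbabilityMeasure ν]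
    (hae : ∀ᵐ τ ∂ν, 0 ≤ τ) (k : ℕ) {z : ℂ} (hz : 0 < z.re) :
    HasDerivAt (fun w => ∫ τ : ℝ, (-(τ:ℂ))^k * Complex.exp (-(τ:ℂ)*w) ∂ν)
      (∫ τ : ℝ, (-(τ:ℂ))^(k+1) * Complex.exp (-(τ:ℂ)*z) ∂ν) z := by
  set ε := z.re / 2 with hεdef
  have hε : 0 < ε := by positivity
  have hball : ∀ x ∈ ball z ε, ε ≤ x.re := by
    intro x hx
    have h1 : |x.re - z.re| ≤ ‖x - z‖ := by
      simpa using Complex.abs_re_le_norm (x - z)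
    have h2 : ‖x - z‖ < ε := by
      rw [← Complex.dist_eq]; exact mem_ball.mp hx
    have := abs_lt.mp (lt_of_le_of_lt h1 h2)
    simp only [hεdef] at *
    linarith [this.1]
  refine (hasDerivAt_integral_of_dominated_loc_of_deriv_le (μ := ν)
    (F := fun w (τ : ℝ) => (-(τ:ℂ))^k * Complex.exp (-(τ:ℂ)*w))
    (F' := fun w (τ : ℝ) => (-(τ:ℂ))^(k+1) * Complex.exp (-(τ:ℂ)*w))
    (bound := fun _ => ((k+1).factorial : ℝ) / ε^(k+1)) (ball_mem_nhds z hε)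
    (Eventually.of_forall fun w => ((cont_aux k w).aestronglyMeasurable))
    (integrable_aux ν hae k hz)
    ((cont_aux (k+1) z).aestronglyMeasurable)
    ?_ (integrable_const _) ?_).2
  · filter_upwards [hae] with τ hτ
    intro x hx
    rw [norm_aux (k+1) hτ x]
    calc τ^(k+1) * Real.exp (-(τ * x.re))
        ≤ τ^(k+1) * Real.exp (-(τ * ε)) :=
          mul_le_mul_of_nonneg_left
            (Real.exp_le_exp.mpr (by nlinarith [hball x hx])) (by positivity)
      _ ≤ ((k+1).factorial : ℝ) / ε^(k+1) := bound_aux (k+1) hε hτ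
  · refine Eventually.of_forall fun τ => fun x _ => ?_
    have h1 : HasDerivAt (fun w : ℂ => -(τ:ℂ) * w) (-(τ:ℂ)) x := by
      simpa using (hasDerivAt_id x).const_mul (-(τ:ℂ))
    have h2 := h1.cexp
    have h3 := h2.const_mul ((-(τ:ℂ))^k)
    exact h3.congr_deriv (by ring)

private lemma iteratedDeriv_aux (ν : Measure ℝ) [IsProbabilityMeasure ν]
    (hae : ∀ᵐ τ ∂ν, 0 ≤ τ) (k : ℕ) {z : ℂ} (hz : 0 < z.re) :
    iteratedDeriv k (fun w => ∫ τ : ℝ, Complex.exp (-(τ:ℂ)*w) ∂ν) z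
      = ∫ τ : ℝ, (-(τ:ℂ))^k * Complex.exp (-(τ:ℂ)*z) ∂ν := by
  have hbase : (fun w => ∫ τ : ℝ, Complex.exp (-(τ:ℂ)*w) ∂ν)
      = (fun w => ∫ τ : ℝ, (-(τ:ℂ))^0 * Complex.exp (-(τ:ℂ)*w) ∂ν) := by
    simp
  induction k generalizing z with
  | zero => simp
  | succ k ih =>
    rw [iteratedDeriv_succ]
    have hopen : {w : ℂ | 0 < w.re} ∈ 𝓝 z :=
      (isOpen_lt continuous_const Complex.continuous_re).mem_nhds hz
    have hEq : iteratedDeriv k (fun w => ∫ τ : ℝ, Complex.exp (-(τ:ℂ)*w) ∂ν)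
        =ᶠ[𝓝 z] (fun w => ∫ τ : ℝ, (-(τ:ℂ))^k * Complex.exp (-(τ:ℂ)*w) ∂ν) := by
      filter_upwards [hopen] with w hw using ih hw
    rw [hEq.deriv_eq]
    exact (hasDerivAt_aux ν hae k hz).deriv

/-- If `ν_β` is a probability measure on `[0,∞)` whose Laplace transform is `E_β(−·)`,
then the mixture `∫ π_{λτ} dν_β(τ)` of Poisson measures is the fractional Poisson measure:
the mass of each `{k}` is `(λᵏ/k!)·E_β⁽ᵏ⁾(−λ)`. -/
theorem fracPoisson_is_poisson_mixture (β lam : ℝ) (hβ : 0 < β) (hβ1 : β ≤ 1)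
    (hlam : 0 < lam) (ν : Measure ℝ) [IsProbabilityMeasure ν]
    (hν0 : ν (Set.Iio 0) = 0)
    (hLT : ∀ z : ℂ, 0 ≤ z.re →
      ∫ τ : ℝ, Complex.exp (-(τ : ℂ) * z) ∂ν = mittagLeffler β (-z)) :
    ∀ k : ℕ,
      ∫ τ : ℝ, ((lam * τ : ℝ) : ℂ) ^ k / ((k).factorial : ℂ) * Complex.exp (-((lam * τ : ℝ) : ℂ)) ∂ν
        = (lam : ℂ) ^ k / ((k).factorial : ℂ) * iteratedDeriv k (mittagLeffler β) (-(lam : ℂ)) := by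
  have hae : ∀ᵐ τ ∂ν, 0 ≤ τ := by
    rw [ae_iff]
    simpa [not_le, Set.Iio] using hν0
  have hre : (0:ℝ) < (lam:ℂ).re := by simpa using hlam
  have hML : (fun w => ∫ τ : ℝ, Complex.exp (-(τ:ℂ)*w) ∂ν)
      =ᶠ[𝓝 (lam:ℂ)] (fun w => mittagLeffler β (-w)) := by
    have hopen : {w : ℂ | 0 < w.re} ∈ 𝓝 (lam:ℂ) :=
      (isOpen_lt continuous_const Complex.continuous_re).mem_nhds hre
    filter_upwards [hopen] with w hw
    exact hLT w hw.le
  intro k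
  have key : (∫ τ : ℝ, (-(τ:ℂ))^k * Complex.exp (-(τ:ℂ)*(lam:ℂ)) ∂ν)
      = (-1:ℂ)^k * iteratedDeriv k (mittagLeffler β) (-(lam:ℂ)) := by
    rw [← iteratedDeriv_aux ν hae k hre, hML.iteratedDeriv_eq k,
      iteratedDeriv_comp_neg k (mittagLeffler β) (lam:ℂ)]
    simp [smul_eq_mul]
  have hcongr : ∀ τ : ℝ,
      ((lam * τ : ℝ) : ℂ) ^ k / ((k).factorial : ℂ) * Complex.exp (-((lam * τ : ℝ) : ℂ))
      = ((lam:ℂ)^k / ((k).factorial : ℂ) * (-1:ℂ)^k)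
          * ((-(τ:ℂ))^k * Complex.exp (-(τ:ℂ)*(lam:ℂ))) := by
    intro τ
    have harg : -((lam * τ : ℝ) : ℂ) = -(τ:ℂ)*(lam:ℂ) := by push_cast; ring
    have hτk : (-1:ℂ)^k * (-(τ:ℂ))^k = (τ:ℂ)^k := by
      rw [← mul_pow]; norm_num
    rw [harg]
    calc ((lam * τ : ℝ) : ℂ) ^ k / ((k).factorial : ℂ) * Complex.exp (-(τ:ℂ)*(lam:ℂ))
        = (lam:ℂ)^k / ((k).factorial : ℂ) * ((-1:ℂ)^k * (-(τ:ℂ))^k)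
            * Complex.exp (-(τ:ℂ)*(lam:ℂ)) := by
          rw [hτk]; push_cast; ring
      _ = ((lam:ℂ)^k / ((k).factorial : ℂ) * (-1:ℂ)^k)
            * ((-(τ:ℂ))^k * Complex.exp (-(τ:ℂ)*(lam:ℂ))) := by ring
  calc ∫ τ : ℝ, ((lam * τ : ℝ) : ℂ) ^ k / ((k).factorial : ℂ)
          * Complex.exp (-((lam * τ : ℝ) : ℂ)) ∂ν
      = ∫ τ : ℝ, ((lam:ℂ)^k / ((k).factorial : ℂ) * (-1:ℂ)^k)
          * ((-(τ:ℂ))^k * Complex.exp (-(τ:ℂ)*(lam:ℂ))) ∂ν := by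
        exact integral_congr_ae (Eventually.of_forall hcongr)
    _ = ((lam:ℂ)^k / ((k).factorial : ℂ) * (-1:ℂ)^k)
          * ∫ τ : ℝ, (-(τ:ℂ))^k * Complex.exp (-(τ:ℂ)*(lam:ℂ)) ∂ν := by
        exact integral_const_mul _ _
    _ = (lam:ℂ)^k / ((k).factorial : ℂ) * ((-1:ℂ)^k * (-1:ℂ)^k)
          * iteratedDeriv k (mittagLeffler β) (-(lam:ℂ)) := by rw [key]; ring
    _ = (lam : ℂ) ^ k / ((k).factorial : ℂ)
          * iteratedDeriv k (mittagLeffler β) (-(lam : ℂ)) := by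
        rw [← mul_pow]; norm_num
end

section
/- Define the generalized Charlier kernels C_n^{λ,β}(k) by the expansion (1+u)^k / E_β(λu) = Σ_{n=0}^∞ (u^n/n!) C_n^{λ,β}(k) for u near 0. Then C_n^{λ,β}(k) = Σ_{m=0}^n s(n,m) P_m^{λ,β}(k), where P_m^{λ,β}(k) are the kernels of the expansion e^{sk}/E_β(λ(e^s−1)) = Σ_m (s^m/m!) P_m^{λ,β}(k) and s(n,m) are signed Stirling numbers of the first kind. -/
/-- Signed Stirling numbers of the first kind: coefficients of the falling factorial. -/
noncomputable def stirling1 (n k : ℕ) : ℤ := (descPochhammer ℤ n).coeff k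


lemma stirling1_zero (m : ℕ) : stirling1 0 m = if m = 0 then 1 else 0 := by
  simp [stirling1, descPochhammer_zero, Polynomial.coeff_one, eq_comm]

lemma stirling1_succ (n m : ℕ) :
    stirling1 (n+1) (m+1) = stirling1 n m - n * stirling1 n (m+1) := by
  simp only [stirling1, descPochhammer_succ_right, ← Polynomial.C_eq_natCast,
    mul_sub, Polynomial.coeff_sub, Polynomial.coeff_mul_X, Polynomial.coeff_mul_C]
  ring

lemma stirling1_succ_zero (n : ℕ) : stirling1 (n+1) 0 = -(n * stirling1 n 0) := by
  simp only [stirling1, descPochhammer_succ_right, ← Polynomial.C_eq_natCast,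
    mul_sub, Polynomial.coeff_sub, Polynomial.coeff_mul_C]
  rw [Polynomial.coeff_mul_X_zero]
  ring

lemma stirling1_eq_zero_of_lt {n m : ℕ} (h : n < m) : stirling1 n m = 0 := by
  apply Polynomial.coeff_eq_zero_of_natDegree_lt
  rwa [descPochhammer_natDegree]

lemma stirling1_abs_le (n m : ℕ) : |stirling1 n m| ≤ (n.factorial : ℤ) := by
  induction n generalizing m with
  | zero => rw [stirling1_zero]; split <;> simp
  | succ n ih =>
    cases m with
    | zero =>
      rw [stirling1_succ_zero, abs_neg, abs_mul, Nat.abs_cast, Nat.factorial_succ]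
      push_cast
      calc (n:ℤ) * |stirling1 n 0| ≤ n * n.factorial := by
            exact mul_le_mul_of_nonneg_left (ih 0) (by positivity)
        _ ≤ (n+1) * n.factorial := by nlinarith [Nat.factorial_pos n]
    | succ m =>
      rw [stirling1_succ]
      calc |stirling1 n m - n * stirling1 n (m+1)|
          ≤ |stirling1 n m| + |(n:ℤ) * stirling1 n (m+1)| := abs_sub _ _
        _ ≤ n.factorial + n * n.factorial := by
            rw [abs_mul, Nat.abs_cast]
            exact add_le_add (ih m) (mul_le_mul_of_nonneg_left (ih (m+1)) (by positivity))
        _ = ((n+1).factorial : ℤ) := by rw [Nat.factorial_succ]; push_cast; ring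

lemma stirling1_sign (n m : ℕ) : 0 ≤ (-1 : ℤ)^(n+m) * stirling1 n m := by
  induction n generalizing m with
  | zero => rw [stirling1_zero]; split <;> simp [*]
  | succ n ih =>
    cases m with
    | zero =>
      rw [stirling1_succ_zero]
      have := ih 0
      have : (0:ℤ) ≤ (-1)^n * stirling1 n 0 := by simpa using ih 0
      rw [pow_succ]
      nlinarith
    | succ m =>
      rw [stirling1_succ]
      have h1 : (0:ℤ) ≤ (-1)^(n+m) * stirling1 n m := ih m
      have h2 : (0:ℤ) ≤ (-1)^(n+(m+1)) * stirling1 n (m+1) := ih (m+1)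
      have e : (n+1)+(m+1) = (n+m)+2 := by ring
      rw [e, pow_add]
      rw [pow_add] at h2
      have h2' : (0:ℤ) ≤ -((-1)^(n+m) * stirling1 n (m+1)) := by
        have hh : (-1:ℤ)^n * ((-1)^m * (-1)^1) = -(-1)^(n+m) := by rw [pow_add]; ring
        rw [pow_add, hh, neg_mul] at h2; linarith
      have hn : (0:ℤ) ≤ (n:ℤ) := by positivity
      nlinarith [mul_nonneg hn h2']


open FormalMultilinearSeries NNReal ENNReal

lemma norm_coe_nnreal_complex (r : ℝ≥0) : ‖((r : ℝ) : ℂ)‖ = (r : ℝ) := by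
  rw [Complex.norm_real, Real.norm_eq_abs, abs_of_nonneg r.coe_nonneg]

lemma hasFPowerSeriesOnBall_of_hasSum (a : ℕ → ℂ) (f : ℂ → ℂ) {ε : ℝ}
    (h : ∀ u : ℂ, ‖u‖ < ε → HasSum (fun n => a n * u ^ n) (f u)) {r : ℝ≥0}
    (hr : 0 < r) (hrε : (r : ℝ) < ε) :
    HasFPowerSeriesOnBall f (ofScalars ℂ a) 0 r := by
  constructor
  · apply le_radius_of_summable
    have h1 := (h ((r : ℝ) : ℂ) (by rw [norm_coe_nnreal_complex]; exact hrε)).summable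
    have hs : Summable fun n => ‖a n * ((r : ℝ) : ℂ) ^ n‖ := summable_norm_iff.mpr h1
    apply hs.congr
    intro n
    rw [norm_mul, norm_pow, norm_coe_nnreal_complex, ofScalars_norm]
  · exact_mod_cast hr
  · intro y hy
    rw [EMetric.mem_ball, edist_zero_right] at hy
    have hy' : ‖y‖ < ε := by
      refine lt_of_lt_of_le ?_ hrε.le
      exact_mod_cast hy
    have := h y hy'
    simp only [ofScalars_apply_eq, smul_eq_mul, zero_add]
    exact this

lemma coeff_unique {a b : ℕ → ℂ} {f : ℂ → ℂ} {εa εb : ℝ} (ha' : 0 < εa) (hb' : 0 < εb)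
    (ha : ∀ u : ℂ, ‖u‖ < εa → HasSum (fun n => a n * u ^ n) (f u))
    (hb : ∀ u : ℂ, ‖u‖ < εb → HasSum (fun n => b n * u ^ n) (f u)) : a = b := by
  set δ := min εa εb with hδ
  have hδ0 : 0 < δ := lt_min ha' hb'
  set r : ℝ≥0 := (δ / 2).toNNReal with hrdef
  have hr0 : 0 < r := by simp [hrdef, Real.toNNReal_pos]; linarith
  have hrr : (r : ℝ) = δ / 2 := Real.coe_toNNReal _ (by linarith)
  have h1 : HasFPowerSeriesOnBall f (ofScalars ℂ a) 0 r :=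
    hasFPowerSeriesOnBall_of_hasSum a f ha hr0 (by rw [hrr]; have := min_le_left εa εb; linarith [hδ0])
  have h2 : HasFPowerSeriesOnBall f (ofScalars ℂ b) 0 r :=
    hasFPowerSeriesOnBall_of_hasSum b f hb hr0 (by rw [hrr]; have := min_le_right εa εb; linarith [hδ0])
  have := h1.hasFPowerSeriesAt.eq_formalMultilinearSeries h2.hasFPowerSeriesAt
  exact (ofScalars_series_eq_iff ℂ a b).mp this

lemma summable_norm_of_hasSum {a : ℕ → ℂ} {f : ℂ → ℂ} {ε : ℝ}
    (h : ∀ u : ℂ, ‖u‖ < ε → HasSum (fun n => a n * u ^ n) (f u)) {x : ℝ}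
    (hx0 : 0 ≤ x) (hx : x < ε) :
    Summable fun n => ‖a n‖ * x ^ n := by
  set ρ := (x + ε) / 2 with hρdef
  have hxρ : x ≤ ρ := by rw [hρdef]; linarith
  have hρε : ρ < ε := by rw [hρdef]; linarith
  have hρ0 : 0 ≤ ρ := le_trans hx0 hxρ
  have h1 := (h (ρ : ℂ) (by rw [Complex.norm_real, Real.norm_eq_abs, abs_of_nonneg hρ0]; exact hρε)).summable
  have hs : Summable fun n => ‖a n‖ * ρ ^ n := by
    apply (summable_norm_iff.mpr h1).congr
    intro n
    rw [norm_mul, norm_pow, Complex.norm_real, Real.norm_eq_abs, abs_of_nonneg hρ0]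
  apply hs.of_nonneg_of_le
  · intro n; positivity
  · intro n
    exact mul_le_mul_of_nonneg_left (pow_le_pow_left₀ hx0 hxρ n) (norm_nonneg _)

lemma derivSeries_ofScalars_apply_one (a : ℕ → ℂ) (n : ℕ) (u : ℂ) :
    ((ofScalars ℂ a).derivSeries n fun _ => u) 1 = ((n : ℂ) + 1) * a (n + 1) * u ^ n := by
  rcases eq_or_ne u 0 with rfl | hu
  · cases n with
    | zero =>
      have h0 : ((ofScalars ℂ a).derivSeries 0 fun _ => (0 : ℂ)) =
          (ofScalars ℂ a).derivSeries 0 fun _ => (1 : ℂ) := by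
        congr 1; funext i; exact absurd i.2 (by omega)
      rw [h0]
      have := (ofScalars ℂ a).derivSeries_apply_diag 0 (1 : ℂ)
      rw [this, ofScalars_apply_eq]
      simp
    | succ n =>
      have hz : ((ofScalars ℂ a).derivSeries (n + 1) fun _ => (0 : ℂ)) = 0 :=
        ContinuousMultilinearMap.map_coord_zero _ (0 : Fin (n + 1)) rfl
      rw [hz]
      simp
  · have hd := (ofScalars ℂ a).derivSeries_apply_diag n u
    have e1 : u • (1 : ℂ) = u := by simp
    have hlin : u * ((ofScalars ℂ a).derivSeries n fun _ => u) 1 =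
        ((ofScalars ℂ a).derivSeries n fun _ => u) u := by
      rw [← smul_eq_mul, ← map_smul, e1]
    rw [hd, ofScalars_apply_eq] at hlin
    apply mul_left_cancel₀ hu
    rw [hlin]
    push_cast
    simp only [smul_eq_mul, nsmul_eq_mul]
    push_cast
    ring

lemma hasSum_deriv_of_hasFPowerSeriesOnBall {a : ℕ → ℂ} {f : ℂ → ℂ}
    (h : HasFPowerSeriesOnBall f (ofScalars ℂ a) 0 1) {u : ℂ} (hu : ‖u‖ < 1) :
    HasSum (fun n : ℕ => ((n : ℂ) + 1) * a (n + 1) * u ^ n) (deriv f u) := by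
  have hd := h.fderiv
  have hmem : u ∈ Metric.eball (0 : ℂ) 1 := by
    rw [EMetric.mem_ball, edist_zero_right]
    rw [← ofReal_norm]; exact ENNReal.ofReal_lt_one.mpr hu
  have hs := hd.hasSum hmem
  have hs2 := hs.mapL (ContinuousLinearMap.apply ℂ ℂ (1 : ℂ))
  have he : ∀ n, (ContinuousLinearMap.apply ℂ ℂ (1 : ℂ))
      ((ofScalars ℂ a).derivSeries n fun _ => u) = ((n : ℂ) + 1) * a (n + 1) * u ^ n := by
    intro n
    rw [ContinuousLinearMap.apply_apply, derivSeries_ofScalars_apply_one]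
  rw [zero_add] at hs2
  have : (ContinuousLinearMap.apply ℂ ℂ (1 : ℂ)) (fderiv ℂ f u) = deriv f u := by
    rw [ContinuousLinearMap.apply_apply, fderiv_apply_one_eq_deriv]
  rw [this] at hs2
  exact HasSum.congr_fun hs2 fun n => (he n).symm

lemma eq_zero_of_deriv_zero {h : ℂ → ℂ} (hd : ∀ u : ℂ, ‖u‖ < 1 → HasDerivAt h 0 u)
    {u : ℂ} (hu : ‖u‖ < 1) (h0 : h 0 = 0) : h u = 0 := by
  have hconv : Convex ℝ (Metric.ball (0 : ℂ) 1) := convex_ball _ _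
  have key := hconv.norm_image_sub_le_of_norm_hasFDerivWithin_le
    (f := h) (f' := fun _ => (0 : ℂ →L[ℝ] ℂ)) (C := 0) ?_ ?_ (Metric.mem_ball_self one_pos)
    (by simpa [Metric.mem_ball] using hu)
  · have := key
    simp only [norm_zero, zero_mul, h0, sub_zero] at this
    exact norm_le_zero_iff.mp this
  · intro x hx
    rw [Metric.mem_ball, dist_zero_right] at hx
    have := ((hd x hx).hasFDerivAt).restrictScalars ℝ
    have h2 : (ContinuousLinearMap.toSpanSingleton ℂ (0 : ℂ)).restrictScalars ℝ = (0 : ℂ →L[ℝ] ℂ) := by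
      ext z; simp
    rw [h2] at this
    exact this.hasFDerivWithinAt
  · intro x _; simp

noncomputable def stirF (m : ℕ) : ℂ → ℂ :=
  fun u => ∑' n : ℕ, (stirling1 n m : ℂ) / (n.factorial : ℂ) * u ^ n

lemma stirCoeff_norm_le (m n : ℕ) : ‖(stirling1 n m : ℂ) / (n.factorial : ℂ)‖ ≤ 1 := by
  rw [norm_div]
  have h1 : ‖((stirling1 n m : ℤ) : ℂ)‖ = |(stirling1 n m : ℝ)| := by
    rw [show ((stirling1 n m : ℤ) : ℂ) = (((stirling1 n m : ℤ) : ℝ) : ℂ) by push_cast; ring,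
      Complex.norm_real, Real.norm_eq_abs]
  have h2 : ‖((n.factorial : ℕ) : ℂ)‖ = (n.factorial : ℝ) := by
    rw [show ((n.factorial : ℕ) : ℂ) = ((n.factorial : ℝ) : ℂ) by push_cast; ring,
      Complex.norm_real, Real.norm_eq_abs, abs_of_nonneg (by positivity)]
  rw [h1, h2, div_le_one (by positivity)]
  have := stirling1_abs_le n m
  calc |(stirling1 n m : ℝ)| = ((|stirling1 n m| : ℤ) : ℝ) := by push_cast; ring
    _ ≤ ((n.factorial : ℤ) : ℝ) := by exact_mod_cast this
    _ = (n.factorial : ℝ) := by push_cast; ring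

lemma stirF_hasSum (m : ℕ) {u : ℂ} (hu : ‖u‖ < 1) :
    HasSum (fun n : ℕ => (stirling1 n m : ℂ) / (n.factorial : ℂ) * u ^ n) (stirF m u) := by
  have hs : Summable fun n : ℕ => (stirling1 n m : ℂ) / (n.factorial : ℂ) * u ^ n := by
    apply Summable.of_norm
    apply (summable_geometric_of_lt_one (norm_nonneg u) hu).of_nonneg_of_le
      (fun n => norm_nonneg _)
    intro n
    rw [norm_mul, norm_pow]
    calc ‖(stirling1 n m : ℂ) / (n.factorial : ℂ)‖ * ‖u‖ ^ n
        ≤ 1 * ‖u‖ ^ n := by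
          exact mul_le_mul_of_nonneg_right (stirCoeff_norm_le m n) (by positivity)
      _ = ‖u‖ ^ n := one_mul _
  exact hs.hasSum

lemma stirF_ball (m : ℕ) : HasFPowerSeriesOnBall (stirF m)
    (ofScalars ℂ fun n => (stirling1 n m : ℂ) / (n.factorial : ℂ)) 0 1 := by
  constructor
  · have h := le_radius_of_bound (ofScalars ℂ fun n => (stirling1 n m : ℂ) / (n.factorial : ℂ))
      1 (r := 1) fun n => by
        rw [ofScalars_norm]
        simpa using stirCoeff_norm_le m n
    simpa using h
  · exact one_pos
  · intro y hy
    rw [EMetric.mem_ball, edist_zero_right] at hy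
    have hy' : ‖y‖ < 1 := by rw [← ofReal_norm] at hy; exact ENNReal.ofReal_lt_one.mp hy
    simpa only [ofScalars_apply_eq, smul_eq_mul, zero_add] using stirF_hasSum m hy'

lemma cast_factorial_ne_zero (n : ℕ) : ((n.factorial : ℕ) : ℂ) ≠ 0 :=
  Nat.cast_ne_zero.mpr n.factorial_ne_zero

lemma succ_div_succ_fact (c : ℂ) (n : ℕ) :
    ((n : ℂ) + 1) * (c / (((n + 1).factorial : ℕ) : ℂ)) = c / ((n.factorial : ℕ) : ℂ) := by
  have hf : (((n + 1).factorial : ℕ) : ℂ) = ((n : ℂ) + 1) * (n.factorial : ℂ) := by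
    rw [Nat.factorial_succ]; push_cast; ring
  have h1 : ((n : ℂ) + 1) ≠ 0 := Nat.cast_add_one_ne_zero n
  have h2 : ((n.factorial : ℕ) : ℂ) ≠ 0 := Nat.cast_ne_zero.mpr n.factorial_ne_zero
  rw [hf]
  field_simp

lemma stirF_deriv_hasSum (m : ℕ) {u : ℂ} (hu : ‖u‖ < 1) :
    HasSum (fun n : ℕ => (stirling1 (n + 1) m : ℂ) / (n.factorial : ℂ) * u ^ n)
      (deriv (stirF m) u) := by
  have h := hasSum_deriv_of_hasFPowerSeriesOnBall (stirF_ball m) hu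
  refine HasSum.congr_fun h fun n => ?_
  rw [succ_div_succ_fact]

lemma one_add_ne_zero' {u : ℂ} (hu : ‖u‖ < 1) : 1 + u ≠ 0 := by
  intro h
  have : u = -1 := by linear_combination h
  rw [this] at hu
  simp at hu

lemma stirF_ode (m : ℕ) {u : ℂ} (hu : ‖u‖ < 1) :
    (1 + u) * deriv (stirF (m + 1)) u = stirF m u := by
  set D := deriv (stirF (m + 1)) u with hD
  have h1 := stirF_deriv_hasSum (m + 1) hu
  set t : ℕ → ℂ := fun n => (n : ℂ) * ((stirling1 n (m + 1) : ℂ) / (n.factorial : ℂ)) * u ^ n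
    with ht
  have h2' : HasSum (fun n => t (n + 1)) (u * D) := by
    have h2 := h1.mul_left u
    refine HasSum.congr_fun h2 fun n => ?_
    rw [ht]
    simp only []
    push_cast
    rw [succ_div_succ_fact, pow_succ]
    ring
  have h3 : HasSum t (u * D) := by
    refine (hasSum_nat_add_iff' 1).mp ?_
    convert h2' using 1
    · rfl
    · simp [ht]
  have h4 := h1.add h3
  have h5 : HasSum (fun n : ℕ => (stirling1 n m : ℂ) / (n.factorial : ℂ) * u ^ n)
      (D + u * D) := by
    refine HasSum.congr_fun h4 fun n => ?_
    have hrec : (stirling1 (n + 1) (m + 1) : ℂ) = (stirling1 n m : ℂ) - n * stirling1 n (m + 1) := by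
      rw [stirling1_succ]; push_cast; ring
    rw [ht]
    simp only []
    rw [hrec]
    field_simp
    ring
  have := h5.unique (stirF_hasSum m hu)
  rw [← this]
  ring

noncomputable def logPow (m : ℕ) : ℂ → ℂ :=
  fun u => (Complex.log (1 + u)) ^ m / (m.factorial : ℂ)

lemma logPow_hasDerivAt (m : ℕ) {u : ℂ} (hu : ‖u‖ < 1) :
    HasDerivAt (logPow (m + 1)) (logPow m u / (1 + u)) u := by
  have hsp : 1 + u ∈ Complex.slitPlane := Complex.mem_slitPlane_of_norm_lt_one hu
  have hne : 1 + u ≠ 0 := one_add_ne_zero' hu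
  have hlog : HasDerivAt (fun v : ℂ => Complex.log (1 + v)) (1 / (1 + u)) u := by
    have h0 : HasDerivAt (fun v : ℂ => 1 + v) 1 u := by
      simpa using (hasDerivAt_id u).const_add 1
    simpa using h0.clog hsp
  have hpow := hlog.fun_pow (m + 1)
  have hdiv := hpow.div_const ((m + 1).factorial : ℂ)
  convert hdiv using 1
  · rfl
  · rfl
  · rfl
  simp only [logPow, Nat.add_sub_cancel]
  have hf : (((m + 1).factorial : ℕ) : ℂ) = ((m : ℂ) + 1) * (m.factorial : ℂ) := by
    rw [Nat.factorial_succ]; push_cast; ring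
  have h1n : ((m : ℂ) + 1) ≠ 0 := Nat.cast_add_one_ne_zero m
  have hm : ((m.factorial : ℕ) : ℂ) ≠ 0 := cast_factorial_ne_zero m
  rw [hf]
  push_cast
  field_simp

lemma stirF_zero_val (m : ℕ) : stirF m 0 = if m = 0 then 1 else 0 := by
  rw [stirF]
  rw [tsum_eq_single 0]
  · rw [stirling1_zero]
    split <;> simp
  · intro n hn
    simp [zero_pow hn]

lemma stirF_eq_logPow (m : ℕ) : ∀ u : ℂ, ‖u‖ < 1 → stirF m u = logPow m u := by
  induction m with
  | zero =>
    intro u hu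
    have h : stirF 0 u = 1 := by
      rw [stirF, tsum_eq_single 0]
      · simp [stirling1_zero]
      · intro n hn
        have : stirling1 n 0 = 0 := by
          cases n with
          | zero => exact absurd rfl hn
          | succ k =>
            have := descPochhammer_eval_zero (R := ℤ) (n := k + 1)
            rw [stirling1, Polynomial.coeff_zero_eq_eval_zero, this]
            simp
        simp [this]
    rw [h, logPow]
    simp
  | succ m ih =>
    intro u hu
    set h : ℂ → ℂ := fun v => stirF (m + 1) v - logPow (m + 1) v with hdef
    have key : ∀ v : ℂ, ‖v‖ < 1 → HasDerivAt h 0 v := by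
      intro v hv
      have hF : HasDerivAt (stirF (m + 1)) (deriv (stirF (m + 1)) v) v := by
        have hmem : v ∈ Metric.eball (0 : ℂ) 1 := by
          rw [EMetric.mem_ball, edist_zero_right]
          rw [← ofReal_norm]; exact ENNReal.ofReal_lt_one.mpr hv
        have hdo := (stirF_ball (m + 1)).differentiableOn
        exact (hdo.differentiableAt (EMetric.isOpen_ball.mem_nhds hmem)).hasDerivAt
      have hode := stirF_ode m hv
      have hne : 1 + v ≠ 0 := one_add_ne_zero' hv
      have hDval : deriv (stirF (m + 1)) v = stirF m v / (1 + v) := by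
        rw [eq_div_iff hne, mul_comm]
        exact hode
      have hG := logPow_hasDerivAt m hv
      have hGv : HasDerivAt (logPow (m + 1)) (stirF m v / (1 + v)) v := by
        rw [ih v hv]
        exact hG
      have hsub := hF.fun_sub hGv
      rw [hDval] at hsub
      simpa [hdef] using hsub
    have h0 : h 0 = 0 := by
      rw [hdef]
      simp [stirF_zero_val, logPow, Complex.log_one]
    have hz := eq_zero_of_deriv_zero key hu h0
    have : stirF (m + 1) u - logPow (m + 1) u = 0 := hz
    linear_combination this

lemma stirling_hasSum (m : ℕ) {u : ℂ} (hu : ‖u‖ < 1) :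
    HasSum (fun n : ℕ => (stirling1 n m : ℂ) / (n.factorial : ℂ) * u ^ n)
      ((Complex.log (1 + u)) ^ m / (m.factorial : ℂ)) := by
  have := stirF_hasSum m hu
  rwa [stirF_eq_logPow m u hu] at this

lemma stirling1_sign_eq (n m : ℕ) :
    ((-1 : ℤ)) ^ (n + m) * stirling1 n m = |stirling1 n m| := by
  have h := stirling1_sign n m
  have habs := abs_of_nonneg h
  rw [← habs, abs_mul, abs_pow, abs_neg, abs_one, one_pow, one_mul]

lemma stirling_abs_hasSum (m : ℕ) {x : ℝ} (h0 : 0 ≤ x) (hx : x < 1) :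
    HasSum (fun n : ℕ => ((|stirling1 n m| : ℤ) : ℝ) / (n.factorial : ℝ) * x ^ n)
      ((-Real.log (1 - x)) ^ m / (m.factorial : ℝ)) := by
  have hu : ‖((-x : ℝ) : ℂ)‖ < 1 := by
    rw [Complex.norm_real, Real.norm_eq_abs, abs_neg, abs_of_nonneg h0]
    exact hx
  have hc := stirling_hasSum m hu
  have hmul := hc.mul_left ((-1 : ℂ) ^ m)
  have hterm : (fun n : ℕ => ((((|stirling1 n m| : ℤ) : ℝ) / (n.factorial : ℝ) * x ^ n : ℝ) : ℂ))
      = fun n : ℕ => (-1 : ℂ) ^ m *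
        ((stirling1 n m : ℂ) / (n.factorial : ℂ) * ((-x : ℝ) : ℂ) ^ n) := by
    funext n
    have hsign : ((((|stirling1 n m| : ℤ) : ℝ)) : ℂ) = (-1 : ℂ) ^ (n + m) * ((stirling1 n m : ℤ) : ℂ) := by
      exact_mod_cast (stirling1_sign_eq n m).symm
    have e1 : ((((|stirling1 n m| : ℤ) : ℝ) / (n.factorial : ℝ) * x ^ n : ℝ) : ℂ)
        = ((((|stirling1 n m| : ℤ) : ℝ)) : ℂ) / ((n.factorial : ℕ) : ℂ) * ((x : ℝ) : ℂ) ^ n := by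
      rw [Complex.ofReal_mul, Complex.ofReal_div, Complex.ofReal_pow, Complex.ofReal_natCast]
    rw [e1, hsign, Complex.ofReal_neg, neg_pow, pow_add]
    ring
  have htarget : (-1 : ℂ) ^ m * (Complex.log (1 + ((-x : ℝ) : ℂ)) ^ m / (m.factorial : ℂ))
      = ((((-Real.log (1 - x)) ^ m / (m.factorial : ℝ)) : ℝ) : ℂ) := by
    have h1 : (1 : ℂ) + ((-x : ℝ) : ℂ) = (((1 - x : ℝ)) : ℂ) := by push_cast; ring
    rw [h1, ← Complex.ofReal_log (by linarith)]
    push_cast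
    rw [← neg_one_mul (Complex.ofReal (Real.log (1 - x))), mul_pow]
    ring
  rw [htarget] at hmul
  rw [← hterm] at hmul
  exact (RCLike.hasSum_ofReal (𝕜 := ℂ)).mp hmul

lemma hasSum_neg_log_real {x : ℝ} (h0 : 0 ≤ x) (hx : x < 1) :
    HasSum (fun n : ℕ => x ^ n / n) (-Real.log (1 - x)) := by
  have hu : ‖((x : ℝ) : ℂ)‖ < 1 := by
    rw [Complex.norm_real, Real.norm_eq_abs, abs_of_nonneg h0]; exact hx
  have hc := Complex.hasSum_taylorSeries_neg_log hu
  have hterm : (fun n : ℕ => ((x ^ n / n : ℝ) : ℂ)) = fun n : ℕ => ((x : ℝ) : ℂ) ^ n / (n : ℂ) := by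
    funext n; push_cast; ring
  have h1 : (1 : ℂ) - ((x : ℝ) : ℂ) = (((1 - x : ℝ)) : ℂ) := by push_cast; ring
  rw [h1, ← Complex.ofReal_log (by linarith), ← Complex.ofReal_neg, ← hterm] at hc
  exact (RCLike.hasSum_ofReal (𝕜 := ℂ)).mp hc

lemma norm_log_one_add_le' {u : ℂ} (hu : ‖u‖ < 1) :
    ‖Complex.log (1 + u)‖ ≤ -Real.log (1 - ‖u‖) := by
  have hc := Complex.hasSum_taylorSeries_log hu
  have hnorm : ∀ n : ℕ, ‖(-1 : ℂ) ^ (n + 1) * u ^ n / n‖ = ‖u‖ ^ n / n := by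
    intro n
    rw [norm_div, norm_mul, norm_pow, norm_pow, norm_neg, norm_one, one_pow, one_mul]
    congr 1
    simp
  have hr := hasSum_neg_log_real (norm_nonneg u) hu
  have hsumm : Summable fun n : ℕ => ‖(-1 : ℂ) ^ (n + 1) * u ^ n / n‖ := by
    apply hr.summable.congr
    intro n
    rw [hnorm n]
  calc ‖Complex.log (1 + u)‖ = ‖∑' n : ℕ, (-1 : ℂ) ^ (n + 1) * u ^ n / n‖ := by
        rw [hc.tsum_eq]
    _ ≤ ∑' n : ℕ, ‖(-1 : ℂ) ^ (n + 1) * u ^ n / n‖ := norm_tsum_le_tsum_norm hsumm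
    _ = ∑' n : ℕ, ‖u‖ ^ n / n := tsum_congr hnorm
    _ = -Real.log (1 - ‖u‖) := hr.tsum_eq

lemma norm_int_div_fact (z : ℤ) (n : ℕ) :
    ‖((z : ℤ) : ℂ) / ((n.factorial : ℕ) : ℂ)‖ = ((|z| : ℤ) : ℝ) / (n.factorial : ℝ) := by
  rw [norm_div]
  congr 1
  · rw [show ((z : ℤ) : ℂ) = (((z : ℤ) : ℝ) : ℂ) by push_cast; ring, Complex.norm_real,
      Real.norm_eq_abs, ← Int.cast_abs]
  · rw [show ((n.factorial : ℕ) : ℂ) = (((n.factorial : ℕ) : ℝ) : ℂ) by push_cast; ring,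
      Complex.norm_real, Real.norm_eq_abs, abs_of_nonneg (by positivity)]

lemma norm_nat_fact (n : ℕ) : ‖((n.factorial : ℕ) : ℂ)‖ = (n.factorial : ℝ) := by
  rw [show ((n.factorial : ℕ) : ℂ) = (((n.factorial : ℕ) : ℝ) : ℂ) by push_cast; ring,
    Complex.norm_real, Real.norm_eq_abs, abs_of_nonneg (by positivity)]


/-- The generalized Charlier kernels `Cₙ^{λ,β}`, defined by the expansion of the
modified Wick exponential `(1+u)ᵏ/E_β(λu)`, satisfy
`Cₙ^{λ,β}(k) = ∑ₘ s(n,m) Pₘ^{λ,β}(k)` where `Pₘ^{λ,β}` are the kernels of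
`e^{sk}/E_β(λ(eˢ−1))`. -/
theorem charlier_kernels_stirling_first (β lam : ℝ) (hβ : 0 < β) (hβ1 : β ≤ 1)
    (hlam : 0 < lam) (C P : ℕ → ℕ → ℂ)
    (hC : ∀ k : ℕ, ∃ ε > (0 : ℝ), ∀ u : ℂ, ‖u‖ < ε →
      HasSum (fun n : ℕ => u ^ n / ((n).factorial : ℂ) * C n k)
        ((1 + u) ^ k / mittagLeffler β ((lam : ℂ) * u)))
    (hP : ∀ k : ℕ, ∃ ε > (0 : ℝ), ∀ s : ℂ, ‖s‖ < ε →
      HasSum (fun m : ℕ => s ^ m / ((m).factorial : ℂ) * P m k)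
        (Complex.exp (s * k) / mittagLeffler β ((lam : ℂ) * (Complex.exp s - 1)))) :
    ∀ n k : ℕ, C n k = ∑ m ∈ Finset.range (n + 1), ((stirling1 n m : ℤ) : ℂ) * P m k := by
  intro n0 k
  obtain ⟨ε₁, hε₁, h1⟩ := hC k
  obtain ⟨ε₂, hε₂, h2⟩ := hP k
  set F : ℂ → ℂ := fun u => (1 + u) ^ k / mittagLeffler β ((lam : ℂ) * u) with hF
  have hA : ∀ u : ℂ, ‖u‖ < ε₁ →
      HasSum (fun n : ℕ => (C n k / (n.factorial : ℂ)) * u ^ n) (F u) := by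
    intro u hu
    exact HasSum.congr_fun (h1 u hu) fun n => by ring
  have hB : ∀ s : ℂ, ‖s‖ < ε₂ →
      HasSum (fun m : ℕ => (P m k / (m.factorial : ℂ)) * s ^ m)
        (Complex.exp (s * k) / mittagLeffler β ((lam : ℂ) * (Complex.exp s - 1))) := by
    intro s hs
    exact HasSum.congr_fun (h2 s hs) fun m => by ring
  set d : ℕ → ℂ := fun n =>
    (∑ m ∈ Finset.range (n + 1), ((stirling1 n m : ℤ) : ℂ) * P m k) / (n.factorial : ℂ) with hd
  set x0 : ℝ := 1 - Real.exp (-ε₂) with hx0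
  have hx0pos : 0 < x0 := by
    rw [hx0]
    have : Real.exp (-ε₂) < Real.exp 0 := Real.exp_lt_exp.mpr (by linarith)
    rw [Real.exp_zero] at this
    linarith
  set δ : ℝ := min ε₁ (min x0 1) with hδ
  have hδpos : 0 < δ := lt_min hε₁ (lt_min hx0pos one_pos)
  have hδ1 : δ ≤ 1 := le_trans (min_le_right _ _) (min_le_right _ _)
  have hD : ∀ u : ℂ, ‖u‖ < δ → HasSum (fun n : ℕ => d n * u ^ n) (F u) := by
    intro u hu
    have hx1 : ‖u‖ < 1 := lt_of_lt_of_le hu hδ1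
    have hxx0 : ‖u‖ < x0 := lt_of_lt_of_le hu (le_trans (min_le_right _ _) (min_le_left _ _))
    set s : ℂ := Complex.log (1 + u) with hsdef
    set y : ℝ := -Real.log (1 - ‖u‖) with hy
    have hy0 : 0 ≤ y := by
      rw [hy]
      have := Real.log_nonpos (x := 1 - ‖u‖) (by linarith) (by linarith [norm_nonneg u])
      linarith
    have hyε : y < ε₂ := by
      rw [hy]
      have h1x : (0 : ℝ) < 1 - ‖u‖ := by linarith
      have h2x : Real.exp (-ε₂) < 1 - ‖u‖ := by rw [hx0] at hxx0; linarith
      have := (Real.lt_log_iff_exp_lt h1x).mpr h2x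
      linarith
    have hsε : ‖s‖ < ε₂ := lt_of_le_of_lt (norm_log_one_add_le' hx1) hyε
    set g : ℕ × ℕ → ℂ := fun p =>
      (stirling1 p.2 p.1 : ℂ) / ((p.2).factorial : ℂ) * u ^ p.2 * P p.1 k with hg
    have hrow : ∀ m : ℕ, HasSum (fun n : ℕ => ‖g (m, n)‖)
        (y ^ m / (m.factorial : ℝ) * ‖P m k‖) := by
      intro m
      have hbase := (stirling_abs_hasSum m (norm_nonneg u) hx1).mul_right ‖P m k‖
      rw [hy]
      refine HasSum.congr_fun hbase fun n => ?_
      rw [hg]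
      simp only []
      rw [norm_mul, norm_mul, norm_pow, norm_int_div_fact]
    have hsumrow : Summable (fun m : ℕ => y ^ m / (m.factorial : ℝ) * ‖P m k‖) := by
      have hyP := summable_norm_of_hasSum hB hy0 hyε
      apply hyP.congr
      intro m
      rw [norm_div, norm_nat_fact]
      ring
    have hnormsum : Summable fun p : ℕ × ℕ => ‖g p‖ := by
      refine (summable_prod_of_nonneg fun p => norm_nonneg _).mpr ⟨fun m => (hrow m).summable, ?_⟩
      apply hsumrow.congr
      intro m
      exact ((hrow m).tsum_eq).symm
    have hgsummable : Summable g := hnormsum.of_norm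
    have hgS := hgsummable.hasSum
    have hfib : ∀ m : ℕ, HasSum (fun n : ℕ => g (m, n))
        (s ^ m / (m.factorial : ℂ) * P m k) := by
      intro m
      have := (stirling_hasSum m hx1).mul_right (P m k)
      rw [hsdef]
      exact HasSum.congr_fun this fun n => by rw [hg]
    have hsum1 : HasSum (fun m : ℕ => s ^ m / (m.factorial : ℂ) * P m k) (∑' p, g p) :=
      hgS.prod_fiberwise hfib
    have hval : HasSum (fun m : ℕ => s ^ m / (m.factorial : ℂ) * P m k) (F u) := by
      have h2' := h2 s hsε
      have hexp : Complex.exp s = 1 + u := Complex.exp_log (one_add_ne_zero' hx1)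
      have harg : (lam : ℂ) * (Complex.exp s - 1) = (lam : ℂ) * u := by rw [hexp]; ring
      have hnum : Complex.exp (s * (k : ℕ)) = (1 + u) ^ k := by
        rw [mul_comm, Complex.exp_nat_mul, hexp]
      rw [harg, hnum] at h2'
      exact h2'
    have hSval : (∑' p, g p) = F u := hsum1.unique hval
    rw [hSval] at hgS
    have hgS2 : HasSum (fun p : ℕ × ℕ => g (p.2, p.1)) (F u) :=
      (Equiv.prodComm ℕ ℕ).hasSum_iff.mpr hgS
    have hfib2 : ∀ n : ℕ, HasSum (fun m : ℕ => g (m, n)) (d n * u ^ n) := by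
      intro n
      have hfin : ∀ m ∉ Finset.range (n + 1), g (m, n) = 0 := by
        intro m hm
        rw [hg]
        simp only []
        rw [stirling1_eq_zero_of_lt (by simpa using hm)]
        simp
      have hfs := hasSum_sum_of_ne_finset_zero (L := SummationFilter.unconditional ℕ) hfin
      have heq : (∑ m ∈ Finset.range (n + 1), g (m, n)) = d n * u ^ n := by
        rw [hd]
        simp only []
        rw [div_mul_eq_mul_div, Finset.sum_mul, Finset.sum_div]
        refine Finset.sum_congr rfl fun m _ => ?_
        rw [hg]
        simp only []
        field_simp
      rw [heq] at hfs
      exact hfs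
    exact hgS2.prod_fiberwise hfib2
  have huniq := coeff_unique hε₁ hδpos hA hD
  have hn := congrFun huniq n0
  rw [hd] at hn
  simp only [] at hn
  have hnf : ((n0.factorial : ℕ) : ℂ) ≠ 0 := cast_factorial_ne_zero n0
  field_simp at hn
  exact hn
end

section
/- For 0 < β < 1, the map φ ↦ E_β(∫(e^{iφ(x)} − 1) dσ(x)) on a nuclear test function space is positive definite: for all φ₁,...,φ_n in the test space and z₁,...,z_n ∈ ℂ, Σ_{k,j} E_β(∫(e^{i(φ_k−φ_j)(x)} − 1) dσ(x)) z_k conj(z_j) ≥ 0, provided E_β(−z) = ∫_0^∞ e^{−τz} dν_β(τ) for a probability measure ν_β on [0,∞) and the Poisson characteristic functional exp(τ∫(e^{iφ} − 1)dσ) is positive definite for each τ ≥ 0. -/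
open MeasureTheory

/-- For `0 < β < 1`, the functional `φ ↦ E_β(∫(e^{iφ} − 1)dσ)` is positive definite,
assuming complete monotonicity of `E_β` (mixing representation by a probability measure
`ν_β` on `[0,∞)`) and positive definiteness of the Poisson characteristic functional
`exp(τ∫(e^{iφ} − 1)dσ)` for each `τ ≥ 0`. Positive definiteness of the (complex-valued)
double sum is expressed as: nonnegative real part and vanishing imaginary part. -/
theorem fracPoisson_characteristic_functional_posDef (d : ℕ) (β : ℝ)
    (hβ : 0 < β) (hβ1 : β < 1)
    (σ : Measure (Fin d → ℝ)) (ν : Measure ℝ) [IsProbabilityMeasure ν]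
    (hν0 : ν (Set.Iio 0) = 0)
    (hML : ∀ z : ℂ, 0 ≤ z.re →
      ∫ τ : ℝ, Complex.exp (-(τ : ℂ) * z) ∂ν = mittagLeffler β (-z))
    (hPD : ∀ τ : ℝ, 0 ≤ τ → ∀ (n : ℕ) (φ : Fin n → (Fin d → ℝ) → ℝ) (z : Fin n → ℂ),
      0 ≤ (∑ k : Fin n, ∑ j : Fin n,
          Complex.exp ((τ : ℂ) *
            ∫ x, (Complex.exp (Complex.I * ((φ k x - φ j x : ℝ) : ℂ)) - 1) ∂σ)
            * z k * (starRingEnd ℂ) (z j)).re ∧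
        (∑ k : Fin n, ∑ j : Fin n,
          Complex.exp ((τ : ℂ) *
            ∫ x, (Complex.exp (Complex.I * ((φ k x - φ j x : ℝ) : ℂ)) - 1) ∂σ)
            * z k * (starRingEnd ℂ) (z j)).im = 0)
    (n : ℕ) (φ : Fin n → (Fin d → ℝ) → ℝ) (z : Fin n → ℂ) :
    0 ≤ (∑ k : Fin n, ∑ j : Fin n,
        mittagLeffler β
            (∫ x, (Complex.exp (Complex.I * ((φ k x - φ j x : ℝ) : ℂ)) - 1) ∂σ)
          * z k * (starRingEnd ℂ) (z j)).re ∧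
      (∑ k : Fin n, ∑ j : Fin n,
        mittagLeffler β
            (∫ x, (Complex.exp (Complex.I * ((φ k x - φ j x : ℝ) : ℂ)) - 1) ∂σ)
          * z k * (starRingEnd ℂ) (z j)).im = 0 := by
  classical
  set A : Fin n → Fin n → ℂ := fun k j =>
    ∫ x, (Complex.exp (Complex.I * ((φ k x - φ j x : ℝ) : ℂ)) - 1) ∂σ with hA
  -- a.e. nonnegativity of τ
  have hae : ∀ᵐ τ ∂ν, 0 ≤ τ := by
    rw [ae_iff]
    simpa [not_le, Set.Iio] using hν0
  -- Re of each A k j is nonpositive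
  have hAre : ∀ k j, (A k j).re ≤ 0 := by
    intro k j
    by_cases hint :
        Integrable (fun x => Complex.exp (Complex.I * ((φ k x - φ j x : ℝ) : ℂ)) - 1) σ
    · have h1 : (A k j).re
          = ∫ x, (Complex.exp (Complex.I * ((φ k x - φ j x : ℝ) : ℂ)) - 1).re ∂σ := by
        simp only [hA]
        exact (Complex.reCLM.integral_comp_comm hint).symm
      rw [h1]
      apply integral_nonpos
      intro x
      have : Complex.I * ((φ k x - φ j x : ℝ) : ℂ)
          = ((φ k x - φ j x : ℝ) : ℂ) * Complex.I := mul_comm _ _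
      simp only [Pi.zero_apply, Complex.sub_re, Complex.one_re, this,
        Complex.exp_ofReal_mul_I_re, sub_nonpos]
      exact Real.cos_le_one _
    · have : (A k j) = 0 := by
        simp only [hA]
        exact integral_undef hint
      rw [this]
      simp
  -- Mixing representation
  have hML' : ∀ k j, mittagLeffler β (A k j)
      = ∫ τ : ℝ, Complex.exp ((τ : ℂ) * A k j) ∂ν := by
    intro k j
    have h0 : (0:ℝ) ≤ (-(A k j)).re := by
      rw [Complex.neg_re]; linarith [hAre k j]
    have := hML (-(A k j)) h0
    simpa [neg_mul_neg, neg_neg] using this.symm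
  -- integrability of each term
  have hInt : ∀ k j : Fin n,
      Integrable (fun τ : ℝ =>
        Complex.exp ((τ : ℂ) * A k j) * z k * (starRingEnd ℂ) (z j)) ν := by
    intro k j
    apply Integrable.mono' (integrable_const (‖z k‖ * ‖z j‖))
    · exact (((Complex.continuous_exp.comp
        (Complex.continuous_ofReal.mul continuous_const)).mul
        continuous_const).mul continuous_const).aestronglyMeasurable
    · filter_upwards [hae] with τ hτ
      have hnorm : ‖Complex.exp ((τ : ℂ) * A k j)‖ ≤ 1 := by
        rw [Complex.norm_exp]
        apply Real.exp_le_one_iff.mpr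
        have : ((τ : ℂ) * A k j).re = τ * (A k j).re := by
          simp [Complex.mul_re, Complex.ofReal_re, Complex.ofReal_im]
        rw [this]
        exact mul_nonpos_of_nonneg_of_nonpos hτ (hAre k j)
      calc ‖Complex.exp ((τ : ℂ) * A k j) * z k * (starRingEnd ℂ) (z j)‖
          = ‖Complex.exp ((τ : ℂ) * A k j)‖ * ‖z k‖ * ‖z j‖ := by
            simp [norm_mul]
        _ ≤ 1 * ‖z k‖ * ‖z j‖ := by
            gcongr
        _ = ‖z k‖ * ‖z j‖ := by ring
  -- the key identity: the double sum equals an integral over τ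
  have key : (∑ k : Fin n, ∑ j : Fin n,
        mittagLeffler β (A k j) * z k * (starRingEnd ℂ) (z j))
      = ∫ τ : ℝ, (∑ k : Fin n, ∑ j : Fin n,
          Complex.exp ((τ : ℂ) * A k j) * z k * (starRingEnd ℂ) (z j)) ∂ν := by
    rw [integral_finset_sum]
    · apply Finset.sum_congr rfl
      intro k _
      rw [integral_finset_sum]
      · apply Finset.sum_congr rfl
        intro j _
        rw [hML' k j, ← integral_mul_const, ← integral_mul_const]
      · intro j _; exact hInt k j
    · intro k _
      exact integrable_finset_sum _ (fun j _ => hInt k j)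
  have hSint : Integrable (fun τ : ℝ => ∑ k : Fin n, ∑ j : Fin n,
      Complex.exp ((τ : ℂ) * A k j) * z k * (starRingEnd ℂ) (z j)) ν :=
    integrable_finset_sum _ (fun k _ => integrable_finset_sum _ (fun j _ => hInt k j))
  constructor
  · rw [key]
    have hre : (∫ τ : ℝ, (∑ k : Fin n, ∑ j : Fin n,
          Complex.exp ((τ : ℂ) * A k j) * z k * (starRingEnd ℂ) (z j)) ∂ν).re
        = ∫ τ : ℝ, (∑ k : Fin n, ∑ j : Fin n,
          Complex.exp ((τ : ℂ) * A k j) * z k * (starRingEnd ℂ) (z j)).re ∂ν :=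
      (Complex.reCLM.integral_comp_comm hSint).symm
    rw [hre]
    apply integral_nonneg_of_ae
    filter_upwards [hae] with τ hτ
    exact (hPD τ hτ n φ z).1
  · rw [key]
    have him : (∫ τ : ℝ, (∑ k : Fin n, ∑ j : Fin n,
          Complex.exp ((τ : ℂ) * A k j) * z k * (starRingEnd ℂ) (z j)) ∂ν).im
        = ∫ τ : ℝ, (∑ k : Fin n, ∑ j : Fin n,
          Complex.exp ((τ : ℂ) * A k j) * z k * (starRingEnd ℂ) (z j)).im ∂ν :=
      (Complex.imCLM.integral_comp_comm hSint).symm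
    rw [him]
    have : ∀ᵐ (τ : ℝ) ∂ν, (∑ k : Fin n, ∑ j : Fin n,
        Complex.exp ((τ : ℂ) * A k j) * z k * (starRingEnd ℂ) (z j)).im = 0 := by
      filter_upwards [hae] with τ hτ
      exact (hPD τ hτ n φ z).2
    rw [integral_congr_ae this, integral_zero]
end
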